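/- arXiv:0809.1386 — 4 statements merged into one kernel-verified Lean document; each statement's English description precedes it below -/
import Mathlib

section
/- (Amer–Brumer) Let F be a field of characteristic different from 2 and let f and g be two quadratic forms (homogeneous polynomials of degree 2) in the same n variables over F. Then the quadratic form f + t·g over the rational function field F(t) has a nontrivial zero in F(t)ⁿ if and only if f and g have a common nontrivial zero in Fⁿ. -/
open MvPolynomial

namespace AmerBrumerAux

variable {R S : Type*} [CommRing R] [CommRing S] {n : ℕ}

/-- The polar form of a polynomial. -/
noncomputable def pol (f : MvPolynomial (Fin n) R) (x y : Fin n → R) : R :=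
  eval (x + y) f - eval x f - eval y f

lemma pol_add_form (f g : MvPolynomial (Fin n) R) (x y : Fin n → R) :
    pol (f + g) x y = pol f x y + pol g x y := by
  simp only [pol, map_add]; ring

lemma pol_C_mul (c : R) (f : MvPolynomial (Fin n) R) (x y : Fin n → R) :
    pol (C c * f) x y = c * pol f x y := by
  simp only [pol, map_mul, eval_C]; ring

lemma pol_comm (f : MvPolynomial (Fin n) R) (x y : Fin n → R) :
    pol f x y = pol f y x := by
  simp only [pol, add_comm x y]; ring

lemma degree_two_decomp (m : Fin n →₀ ℕ) (hm : m.degree = 2) :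
    ∃ i j : Fin n, m = Finsupp.single i 1 + Finsupp.single j 1 := by
  have hc : Multiset.card m.toMultiset = 2 := by
    rw [Finsupp.card_toMultiset]
    simpa [Finsupp.degree_apply, Finsupp.sum] using hm
  obtain ⟨i, j, hij⟩ := Multiset.card_eq_two.mp hc
  classical
  refine ⟨i, j, ?_⟩
  have : Finsupp.toMultiset (Finsupp.single i 1 + Finsupp.single j 1) = {i, j} := by
    rw [map_add]
    simp [Finsupp.toMultiset_single]
  have h2 := congrArg Multiset.toFinsupp (hij.trans this.symm)
  rwa [Finsupp.toMultiset_toFinsupp, Finsupp.toMultiset_toFinsupp] at h2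

lemma monomial_pair (i j : Fin n) (c : R) :
    (monomial (Finsupp.single i 1 + Finsupp.single j 1) c : MvPolynomial (Fin n) R)
      = C c * (X i * X j) := by
  rw [add_comm, monomial_single_add,
    show (Finsupp.single i 1 : Fin n →₀ ℕ) = Finsupp.single i 1 + 0 from (add_zero _).symm,
    monomial_single_add]
  rw [show (monomial 0 c : MvPolynomial (Fin n) R) = C c from rfl, pow_one, pow_one]
  ring

/-- Induction principle for statements additive in a homogeneous quadratic polynomial. -/
lemma homog2_induction (P : MvPolynomial (Fin n) R → Prop)
    (h0 : P 0) (hadd : ∀ f g, P f → P g → P (f + g))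
    (hmono : ∀ (i j : Fin n) (c : R), P (C c * (X i * X j)))
    (f : MvPolynomial (Fin n) R) (hf : f.IsHomogeneous 2) : P f := by
  have := f.support_sum_monomial_coeff
  rw [← this]
  refine Finset.sum_induction _ P hadd h0 ?_
  intro m hm
  obtain ⟨i, j, rfl⟩ := degree_two_decomp m (by
    have h2 := hf (mem_support_iff.mp hm)
    rwa [Finsupp.degree_eq_weight_one])
  rw [monomial_pair]
  exact hmono i j _

lemma eval_smul₂ {f : MvPolynomial (Fin n) R} (hf : f.IsHomogeneous 2) (c : R) (x : Fin n → R) :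
    eval (c • x) f = c ^ 2 * eval x f := by
  refine homog2_induction (fun f => eval (c • x) f = c ^ 2 * eval x f) (by simp)
    (fun f g ha hb => by simp only [map_add, ha, hb]; ring) (fun i j d => ?_) f hf
  simp only [map_mul, eval_C, eval_X, Pi.smul_apply, smul_eq_mul]
  ring

lemma pol_right_add {f : MvPolynomial (Fin n) R} (hf : f.IsHomogeneous 2) (x y z : Fin n → R) :
    pol f x (y + z) = pol f x y + pol f x z := by
  refine homog2_induction (fun f => pol f x (y + z) = pol f x y + pol f x z)
    (by simp [pol]) (fun f g ha hb => by simp only [pol_add_form, ha, hb]; ring)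
    (fun i j d => ?_) f hf
  simp only [pol, map_mul, eval_C, eval_X, Pi.add_apply]
  ring

lemma pol_right_smul {f : MvPolynomial (Fin n) R} (hf : f.IsHomogeneous 2) (c : R)
    (x y : Fin n → R) : pol f x (c • y) = c * pol f x y := by
  refine homog2_induction (fun f => pol f x (c • y) = c * pol f x y)
    (by simp [pol]) (fun f g ha hb => by simp only [pol_add_form, ha, hb]; ring)
    (fun i j d => ?_) f hf
  simp only [pol, map_mul, eval_C, eval_X, Pi.add_apply, Pi.smul_apply, smul_eq_mul]
  ring

lemma pol_right_zero {f : MvPolynomial (Fin n) R} (hf : f.IsHomogeneous 2) (x : Fin n → R) :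
    pol f x 0 = 0 := by
  have := pol_right_smul hf (0 : R) x 0
  simpa using this

lemma pol_left_smul {f : MvPolynomial (Fin n) R} (hf : f.IsHomogeneous 2) (c : R)
    (x y : Fin n → R) : pol f (c • x) y = c * pol f x y := by
  rw [pol_comm, pol_right_smul hf, pol_comm]

lemma pol_left_zero {f : MvPolynomial (Fin n) R} (hf : f.IsHomogeneous 2) (y : Fin n → R) :
    pol f 0 y = 0 := by
  rw [pol_comm]; exact pol_right_zero hf y

lemma pol_right_sum {f : MvPolynomial (Fin n) R} (hf : f.IsHomogeneous 2) (x : Fin n → R)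
    {ι : Type*} (s : Finset ι) (y : ι → Fin n → R) :
    pol f x (∑ k ∈ s, y k) = ∑ k ∈ s, pol f x (y k) := by
  classical
  induction s using Finset.induction_on with
  | empty => simpa using pol_right_zero hf x
  | insert _ _ hns ih =>
      rw [Finset.sum_insert hns, Finset.sum_insert hns, pol_right_add hf, ih]

lemma eval_add_pol (f : MvPolynomial (Fin n) R) (x y : Fin n → R) :
    eval (x + y) f = eval x f + eval y f + pol f x y := by
  simp only [pol]; ring

lemma pol_self {f : MvPolynomial (Fin n) R} (hf : f.IsHomogeneous 2) (x : Fin n → R) :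
    pol f x x = 2 * eval x f := by
  have hxx : x + x = (2 : R) • x := by funext i; simp [two_mul, two_smul]
  simp only [pol, hxx, eval_smul₂ hf]
  ring

lemma eval_map_comp (ψ : R →+* S) (x : Fin n → R) (f : MvPolynomial (Fin n) R) :
    eval (fun i => ψ (x i)) (map ψ f) = ψ (eval x f) := by
  rw [eval_map, ← eval₂_id f (g := x), eval₂_comp_left ψ (RingHom.id R) x f]
  rfl

lemma pol_map (ψ : R →+* S) (x y : Fin n → R) (f : MvPolynomial (Fin n) R) :
    pol (map ψ f) (fun i => ψ (x i)) (fun i => ψ (y i)) = ψ (pol f x y) := by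
  have h : ((fun i => ψ (x i)) + fun i => ψ (y i)) = fun i => ψ ((x + y) i) := by
    funext i; simp
  simp only [pol, map_sub, h, eval_map_comp]



lemma natDegree_eval_le (f : MvPolynomial (Fin n) R) (hf : f.IsHomogeneous 2)
    (p : Fin n → Polynomial R) (d : ℕ) (hd : ∀ i, (p i).natDegree ≤ d) :
    (eval p (map Polynomial.C f)).natDegree ≤ 2 * d := by
  refine homog2_induction (fun f => (eval p (map Polynomial.C f)).natDegree ≤ 2 * d)
    (by simp) (fun f g ha hb => ?_) (fun i j c => ?_) f hf
  · simp only [map_add]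
    exact (Polynomial.natDegree_add_le _ _).trans (max_le ha hb)
  · simp only [map_mul, map_C, map_X, eval_C, eval_X]
    calc (Polynomial.C c * (p i * p j)).natDegree
        ≤ (Polynomial.C c).natDegree + (p i * p j).natDegree := Polynomial.natDegree_mul_le
      _ ≤ 0 + ((p i).natDegree + (p j).natDegree) := by
          gcongr
          · simp
          · exact Polynomial.natDegree_mul_le
      _ ≤ 2 * d := by have := hd i; have := hd j; omega

lemma coeff_pol_const {f : MvPolynomial (Fin n) R} (hf : f.IsHomogeneous 2)
    (a : Fin n → R) (p : Fin n → Polynomial R) (k : ℕ) :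
    (pol (map Polynomial.C f) (fun i => Polynomial.C (a i)) p).coeff k
      = pol f a (fun i => (p i).coeff k) := by
  classical
  set N := (Finset.univ.sup fun i : Fin n => (p i).natDegree) + 1 + k with hN
  have hkN : k < N := by omega
  have hp : p = ∑ m ∈ Finset.range N,
      (Polynomial.X ^ m : Polynomial R) • fun i => Polynomial.C ((p i).coeff m) := by
    funext i
    rw [Finset.sum_apply]
    simp only [Pi.smul_apply, smul_eq_mul]
    have hdeg : (p i).natDegree < N := by
      have : (p i).natDegree ≤ Finset.univ.sup fun i : Fin n => (p i).natDegree :=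
        Finset.le_sup (f := fun i : Fin n => (p i).natDegree) (Finset.mem_univ i)
      omega
    conv_lhs => rw [Polynomial.as_sum_range' (p i) N hdeg]
    refine Finset.sum_congr rfl fun m _ => ?_
    rw [← Polynomial.C_mul_X_pow_eq_monomial]
    ring
  conv_lhs => rw [hp, pol_right_sum (hf.map _) _ _ _]
  rw [Polynomial.finset_sum_coeff]
  have hterm : ∀ m ∈ Finset.range N,
      (pol (map Polynomial.C f) (fun i => Polynomial.C (a i))
        ((Polynomial.X ^ m : Polynomial R) • fun i => Polynomial.C ((p i).coeff m))).coeff k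
      = if k = m then pol f a (fun i => (p i).coeff m) else 0 := by
    intro m _
    rw [pol_right_smul (hf.map _), pol_map Polynomial.C a (fun i => (p i).coeff m) f,
      Polynomial.coeff_X_pow_mul', Polynomial.coeff_C]
    split_ifs <;> first | rfl | omega
  rw [Finset.sum_congr rfl hterm, Finset.sum_ite_eq (Finset.range N) k
    (fun m => pol f a fun i => (p i).coeff m), if_pos (Finset.mem_range.mpr hkN)]


lemma key {F : Type*} [Field F] {n : ℕ} (f g : MvPolynomial (Fin n) F)
    (hf : f.IsHomogeneous 2) (hg : g.IsHomogeneous 2) :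
    ∀ (d : ℕ) (p : Fin n → Polynomial F), p ≠ 0 → (∀ i, (p i).natDegree ≤ d) →
    eval p (map Polynomial.C f + C Polynomial.X * map Polynomial.C g) = 0 →
    ∃ y : Fin n → F, y ≠ 0 ∧ eval y f = 0 ∧ eval y g = 0 := by
  set h₁ : MvPolynomial (Fin n) (Polynomial F) :=
    map Polynomial.C f + C Polynomial.X * map Polynomial.C g with hh₁def
  have hh₁ : h₁.IsHomogeneous 2 := (hf.map _).add ((hg.map _).C_mul _)
  intro d
  induction d using Nat.strong_induction_on with
  | _ d ih =>
  intro p hp0 hpd hpz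
  have E : eval p (map Polynomial.C f) + Polynomial.X * eval p (map Polynomial.C g) = 0 := by
    simpa only [hh₁def, map_add, map_mul, eval_C] using hpz
  rcases Nat.eq_zero_or_pos d with hd0 | hd1
  · -- constant case
    subst hd0
    set y : Fin n → F := fun i => (p i).coeff 0 with hy
    have hpy : p = fun i => Polynomial.C (y i) := by
      funext i
      exact Polynomial.eq_C_of_natDegree_le_zero (hpd i)
    rw [hpy, eval_map_comp, eval_map_comp] at E
    have hcf : eval y f = 0 := by
      have h0 := congrArg (fun q : Polynomial F => q.coeff 0) E
      simpa using h0
    have hcg : eval y g = 0 := by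
      have h1 := congrArg (fun q : Polynomial F => q.coeff 1) E
      simpa [Polynomial.coeff_X_mul (n := 0)] using h1
    refine ⟨y, fun hy0 => hp0 ?_, hcf, hcg⟩
    rw [hpy, hy0]
    funext i; simp
  · -- descent case
    have hreduce : ∀ q : Fin n → Polynomial F, q ≠ 0 →
        (∀ i k, d ≤ k → (q i).coeff k = 0) → eval q h₁ = 0 →
        ∃ y : Fin n → F, y ≠ 0 ∧ eval y f = 0 ∧ eval y g = 0 := by
      intro q hq0 hqc hqz
      refine ih (d - 1) (by omega) q hq0 (fun i => ?_) hqz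
      exact Polynomial.natDegree_le_iff_coeff_eq_zero.mpr fun N hN => hqc i N (by omega)
    set a : Fin n → F := fun i => (p i).coeff d with ha
    set b : Fin n → F := fun i => (p i).coeff (d - 1) with hb
    have hpk0 : ∀ k, d < k → ∀ i, (p i).coeff k = 0 := fun k hk i =>
      Polynomial.coeff_eq_zero_of_natDegree_lt (lt_of_le_of_lt (hpd i) hk)
    by_cases ha0 : a = 0
    · refine hreduce p hp0 (fun i k hk => ?_) hpz
      rcases eq_or_lt_of_le hk with rfl | hlt
      · exact congrFun ha0 i
      · exact hpk0 k hlt i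
    -- now a ≠ 0
    set p' : Fin n → Polynomial F := fun i => p i - Polynomial.X ^ d * Polynomial.C (a i)
      with hp'
    have hp'c : ∀ k, d ≤ k → ∀ i, (p' i).coeff k = 0 := by
      intro k hk i
      simp only [hp', Polynomial.coeff_sub, Polynomial.coeff_X_pow_mul', if_pos hk,
        Polynomial.coeff_C]
      rcases eq_or_lt_of_le hk with rfl | hlt
      · simp [ha]
      · rw [hpk0 k hlt i, if_neg (by omega)]
        ring
    have hp'vec0 : ∀ k, d ≤ k → (fun i => (p' i).coeff k) = 0 := by
      intro k hk; funext i; exact hp'c k hk i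
    have hp'k : ∀ k, k ≠ d → ∀ i, (p' i).coeff k = (p i).coeff k := by
      intro k hk i
      simp only [hp', Polynomial.coeff_sub, Polynomial.coeff_X_pow_mul', Polynomial.coeff_C]
      split_ifs with h1 h2
      · omega
      · ring
      · ring
    have hp'd : ∀ i, (p' i).natDegree ≤ d - 1 :=
      fun i => Polynomial.natDegree_le_iff_coeff_eq_zero.mpr fun N hN => hp'c N (by omega) i
    have hdecomp : p = (Polynomial.X ^ d : Polynomial F) • (fun i => Polynomial.C (a i)) + p' := by
      funext i
      simp only [hp', Pi.add_apply, Pi.smul_apply, smul_eq_mul]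
      ring
    -- the master coefficient formula
    have hcoeff : ∀ (f' : MvPolynomial (Fin n) F), f'.IsHomogeneous 2 → ∀ k, 2 * d ≤ k + 1 →
        (eval p (map Polynomial.C f')).coeff k
          = (if k = 2 * d then eval a f' else 0)
            + pol f' a (fun i => (p' i).coeff (k - d)) := by
      intro f' hf' k hk
      have hu : eval ((Polynomial.X ^ d : Polynomial F) • fun i => Polynomial.C (a i))
          (map Polynomial.C f') = Polynomial.C (eval a f') * Polynomial.X ^ (2 * d) := by
        rw [eval_smul₂ (hf'.map _), eval_map_comp]
        ring
      conv_lhs => rw [hdecomp, eval_add_pol, hu, pol_left_smul (hf'.map _)]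
      rw [Polynomial.coeff_add, Polynomial.coeff_add, Polynomial.coeff_C_mul_X_pow,
        Polynomial.coeff_eq_zero_of_natDegree_lt
          (lt_of_le_of_lt (natDegree_eval_le f' hf' p' (d - 1) hp'd) (by omega)),
        Polynomial.coeff_X_pow_mul', if_pos (by omega : d ≤ k), coeff_pol_const hf']
      ring
    -- eval a g = 0
    have hga : eval a g = 0 := by
      have h1 := congrArg (fun q : Polynomial F => q.coeff (2 * d + 1)) E
      simp only [Polynomial.coeff_add, Polynomial.coeff_X_mul, Polynomial.coeff_zero] at h1
      rw [hcoeff f hf _ (by omega), hcoeff g hg _ (by omega), if_neg (by omega), if_pos rfl,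
        hp'vec0 (2 * d + 1 - d) (by omega), hp'vec0 (2 * d - d) (by omega),
        pol_right_zero hf, pol_right_zero hg] at h1
      linear_combination h1
    -- eval a f + pol g a b = 0
    have heq2 : eval a f + pol g a b = 0 := by
      have h1 := congrArg (fun q : Polynomial F => q.coeff (2 * d - 1 + 1)) E
      simp only [Polynomial.coeff_add, Polynomial.coeff_X_mul, Polynomial.coeff_zero] at h1
      rw [show 2 * d - 1 + 1 = 2 * d by omega] at h1
      have hb' : (fun i => (p' i).coeff (2 * d - 1 - d)) = b := by
        funext i
        rw [show 2 * d - 1 - d = d - 1 by omega]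
        exact hp'k (d - 1) (by omega) i
      rw [hcoeff f hf _ (by omega), hcoeff g hg _ (by omega), if_pos rfl, if_neg (by omega),
        hp'vec0 (2 * d - d) (by omega), pol_right_zero hf, hb'] at h1
      linear_combination h1
    by_cases hfa : eval a f = 0
    · exact ⟨a, ha0, hfa, hga⟩
    -- reflection step
    set r : Polynomial F := pol h₁ p (fun i => Polynomial.C (a i)) with hr
    have hAc : eval (fun i => Polynomial.C (a i)) h₁ = Polynomial.C (eval a f) := by
      rw [hh₁def, map_add, map_mul, eval_C, eval_map_comp, eval_map_comp, hga]
      simp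
    have hr_split : r = pol (map Polynomial.C f) p (fun i => Polynomial.C (a i))
        + Polynomial.X * pol (map Polynomial.C g) p (fun i => Polynomial.C (a i)) := by
      rw [hr, hh₁def, pol_add_form, pol_C_mul]
    have hrc : ∀ k, r.coeff (k + 1)
        = pol f a (fun i => (p i).coeff (k + 1)) + pol g a (fun i => (p i).coeff k) := by
      intro k
      rw [hr_split, Polynomial.coeff_add, Polynomial.coeff_X_mul,
        pol_comm (map Polynomial.C f), pol_comm (map Polynomial.C g),
        coeff_pol_const hf, coeff_pol_const hg]
    have hpvec0 : ∀ k, d < k → (fun i => (p i).coeff k) = 0 := by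
      intro k hk; funext i; exact hpk0 k hk i
    have hr_top : ∀ k, d < k → r.coeff k = 0 := by
      intro k hk
      cases k with
      | zero => omega
      | succ m =>
        rw [hrc m, hpvec0 (m + 1) (by omega), pol_right_zero hf]
        by_cases hdm : m = d
        · subst hdm
          have h5 : (fun i => (p i).coeff m) = a := rfl
          rw [h5, pol_self hg, hga]
          ring
        · rw [hpvec0 m (by omega), pol_right_zero hg]
          ring
    have hrd : r.coeff d = eval a f := by
      have h1 := hrc (d - 1)
      rw [show d - 1 + 1 = d by omega] at h1
      have h2 : (fun i => (p i).coeff d) = a := rfl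
      have h3 : (fun i => (p i).coeff (d - 1)) = b := rfl
      rw [h2, h3, pol_self hf] at h1
      rw [h1]
      linear_combination heq2
    set q : Fin n → Polynomial F :=
      fun i => Polynomial.C (eval a f) * p i - r * Polynomial.C (a i) with hq
    have hqz : eval q h₁ = 0 := by
      have hq_eq : q = (Polynomial.C (eval a f)) • p
          + (-r) • (fun i => Polynomial.C (a i)) := by
        funext i
        simp only [hq, Pi.add_apply, Pi.smul_apply, smul_eq_mul]
        ring
      rw [hq_eq, eval_add_pol, eval_smul₂ hh₁, eval_smul₂ hh₁, pol_left_smul hh₁,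
        pol_right_smul hh₁, hAc, hpz, ← hr]
      ring
    have hqc : ∀ i k, d ≤ k → (q i).coeff k = 0 := by
      intro i k hk
      rw [hq]
      simp only [Polynomial.coeff_sub, Polynomial.coeff_C_mul, mul_comm r,
        Polynomial.coeff_C_mul]
      by_cases hkd : k = d
      · subst hkd
        rw [hrd]
        have h5 : (p i).coeff k = a i := rfl
        rw [h5]
        ring
      · rw [hpk0 k (by omega) i, hr_top k (by omega)]
        ring
    by_cases hq0 : q = 0
    · exfalso
      have hre : ∀ i, Polynomial.C (eval a f) * p i = r * Polynomial.C (a i) := by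
        intro i
        have h1 := congrFun hq0 i
        rw [hq] at h1
        exact sub_eq_zero.mp h1
      have hCfa : Polynomial.C (eval a f) ≠ 0 := fun h => hfa (by simpa using h)
      have hvec : (Polynomial.C (eval a f)) • p
          = ((r : Polynomial F) • fun i => Polynomial.C (a i)) := by
        funext i
        simp only [Pi.smul_apply, smul_eq_mul]
        exact hre i
      have h2 : eval (Polynomial.C (eval a f) • p) h₁
          = eval ((r : Polynomial F) • fun i => Polynomial.C (a i)) h₁ := by
        rw [hvec]
      rw [eval_smul₂ hh₁, eval_smul₂ hh₁, hpz, hAc, mul_zero] at h2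
      have h3 : r = 0 := by
        rcases mul_eq_zero.mp h2.symm with h | h
        · exact pow_eq_zero_iff (by norm_num) |>.mp h
        · exact absurd h hCfa
      apply hp0
      funext i
      have h4 := hre i
      rw [h3, zero_mul] at h4
      rcases mul_eq_zero.mp h4 with h | h
      · exact absurd h hCfa
      · simpa using h
    · exact hreduce q hq0 hqc hqz

set_option maxHeartbeats 1000000 in
set_option synthInstance.maxHeartbeats 400000 in
theorem amer_brumer' (F : Type*) [Field F] (hchar : ringChar F ≠ 2) (n : ℕ)
    (f g : MvPolynomial (Fin n) F) (hf : f.IsHomogeneous 2) (hg : g.IsHomogeneous 2) :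
    (∃ x : Fin n → RatFunc F, x ≠ 0 ∧
        eval x (map (algebraMap F (RatFunc F)) f
          + C RatFunc.X * map (algebraMap F (RatFunc F)) g) = 0) ↔
    (∃ y : Fin n → F, y ≠ 0 ∧ eval y f = 0 ∧ eval y g = 0) := by
  constructor
  · rintro ⟨x, hx0, hxz⟩
    set ψ : Polynomial F →+* RatFunc F := algebraMap (Polynomial F) (RatFunc F) with hψ
    have hψinj : Function.Injective ψ := IsFractionRing.injective (Polynomial F) (RatFunc F)
    set H : MvPolynomial (Fin n) (RatFunc F) :=
      map (algebraMap F (RatFunc F)) f + C RatFunc.X * map (algebraMap F (RatFunc F)) g with hH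
    have hHhom : H.IsHomogeneous 2 := (hf.map _).add ((hg.map _).C_mul _)
    set h₁ : MvPolynomial (Fin n) (Polynomial F) :=
      map Polynomial.C f + C Polynomial.X * map Polynomial.C g with hh₁
    have hcomp : ψ.comp (Polynomial.C) = algebraMap F (RatFunc F) := by
      rw [IsScalarTower.algebraMap_eq F (Polynomial F) (RatFunc F), hψ]
      norm_cast
    have hmap : map ψ h₁ = H := by
      rw [hh₁, hH, map_add, map_mul, MvPolynomial.map_map, MvPolynomial.map_map, map_C,
        hcomp, show ψ Polynomial.X = RatFunc.X from RatFunc.algebraMap_X]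
    obtain ⟨bb, hbb⟩ := IsLocalization.exist_integer_multiples
      (nonZeroDivisors (Polynomial F)) Finset.univ x
    choose p hp using fun i => hbb i (Finset.mem_univ i)
    set c : RatFunc F := ψ (bb : Polynomial F) with hc
    have hc0 : c ≠ 0 := by
      rw [hc]
      intro h
      exact nonZeroDivisors.coe_ne_zero bb (hψinj (by simpa using h))
    have hxb : (fun i => ψ (p i)) = c • x := by
      funext i
      rw [hp i, Algebra.smul_def]
      simp [hc, Pi.smul_apply, smul_eq_mul, hψ]
    have heval0 : eval (fun i => ψ (p i)) H = 0 := by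
      rw [hxb, eval_smul₂ hHhom, hxz, mul_zero]
    have hpz : eval p h₁ = 0 := by
      apply hψinj
      rw [← eval_map_comp ψ p h₁, hmap, heval0, map_zero]
    have hp0 : p ≠ 0 := by
      intro h
      apply hx0
      funext i
      have h1 := congrFun hxb i
      rw [h, Pi.zero_apply, map_zero] at h1
      have h2 : c * x i = 0 := by
        simpa [Pi.smul_apply, smul_eq_mul] using h1.symm
      rcases mul_eq_zero.mp h2 with h3 | h3
      · exact absurd h3 hc0
      · simpa using h3
    exact key f g hf hg (Finset.univ.sup fun i : Fin n => (p i).natDegree) p hp0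
      (fun i => Finset.le_sup (f := fun i : Fin n => (p i).natDegree) (Finset.mem_univ i))
      hpz
  · rintro ⟨y, hy0, hyf, hyg⟩
    refine ⟨fun i => algebraMap F (RatFunc F) (y i), ?_, ?_⟩
    · intro h
      apply hy0
      funext i
      have h1 := congrFun h i
      simp only [Pi.zero_apply] at h1
      exact (algebraMap F (RatFunc F)).injective (by simpa using h1)
    · rw [map_add, map_mul, eval_C, eval_map_comp (algebraMap F (RatFunc F)) y f,
        eval_map_comp (algebraMap F (RatFunc F)) y g, hyf, hyg]
      simp

end AmerBrumerAux

open MvPolynomial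

/-- **Amer–Brumer**: for two quadratic forms `f`, `g` in the same `n` variables over a field
`F` of characteristic different from 2, the quadratic form `f + t·g` over the rational
function field `F(t)` has a nontrivial zero in `F(t)ⁿ` if and only if `f` and `g` have a
common nontrivial zero in `Fⁿ`. -/
theorem amer_brumer (F : Type*) [Field F] (hchar : ringChar F ≠ 2) (n : ℕ)
    (f g : MvPolynomial (Fin n) F) (hf : f.IsHomogeneous 2) (hg : g.IsHomogeneous 2) :
    (∃ x : Fin n → RatFunc F, x ≠ 0 ∧
        eval x (map (algebraMap F (RatFunc F)) f
          + C RatFunc.X * map (algebraMap F (RatFunc F)) g) = 0) ↔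
    (∃ y : Fin n → F, y ≠ 0 ∧ eval y f = 0 ∧ eval y g = 0) :=
  AmerBrumerAux.amer_brumer' F hchar n f g hf hg
end

section
/- Let K = ℂ((u))((v)) be the field of iterated formal Laurent series over the complex numbers. Then the diagonal cubic form x₀³ + u·x₁³ + u²·x₂³ + v·x₃³ + vu·x₄³ + vu²·x₅³ + v²·x₆³ + v²u·x₇³ + v²u²·x₈³ has no nontrivial zero in K⁹: its only zero is (0, …, 0). -/
/-- The element `u` of `K = ℂ((u))((v))`: the Laurent series variable of the inner field
`ℂ((u))`, viewed as a constant Laurent series in `v`. -/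
noncomputable def uElt : LaurentSeries (LaurentSeries ℂ) :=
  HahnSeries.C (HahnSeries.single (1 : ℤ) (1 : ℂ))

/-- The element `v` of `K = ℂ((u))((v))`: the Laurent series variable of the outer field. -/
noncomputable def vElt : LaurentSeries (LaurentSeries ℂ) :=
  HahnSeries.single (1 : ℤ) (1 : LaurentSeries ℂ)

open HahnSeries

section Helpers

variable {F : Type*} [Field F]

/-- A strict minimum of `orderTop` among three series summing to zero is impossible. -/
lemma minlem {a b c : HahnSeries ℤ F} (h : a + b + c = 0)
    (h1 : a.orderTop < b.orderTop) (h2 : a.orderTop < c.orderTop) : False := by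
  have e1 : (a + b).orderTop = a.orderTop := orderTop_add_eq_left h1
  have e2 : (a + b + c).orderTop = (a + b).orderTop :=
    orderTop_add_eq_left (by rw [e1]; exact h2)
  rw [h, orderTop_zero, e1] at e2
  rw [← e2] at h1
  exact not_top_lt h1

lemma pairlem {a b : HahnSeries ℤ F} {r s : ℤ}
    (ha : a ≠ 0 → a.order % 3 = r) (hb : b ≠ 0 → b.order % 3 = s) (hrs : r ≠ s)
    (h : a.orderTop = b.orderTop) : a = 0 ∧ b = 0 := by
  by_cases a0 : a = 0
  · subst a0
    rw [orderTop_zero] at h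
    exact ⟨rfl, orderTop_eq_top.mp h.symm⟩
  by_cases b0 : b = 0
  · subst b0
    rw [orderTop_zero] at h
    exact absurd (orderTop_eq_top.mp h) a0
  have : a.order = b.order := by
    have h' : (a.order : WithTop ℤ) = b.order := by
      rw [order_eq_orderTop_of_ne_zero a0, order_eq_orderTop_of_ne_zero b0]; exact h
    exact_mod_cast h'
  exact absurd (by rw [← ha a0, ← hb b0, this]) hrs

/-- Three Laurent series whose orders are `0`, `1`, `2` mod `3` (whenever nonzero)
can only sum to zero if all are zero. -/
lemma key3 {a b c : HahnSeries ℤ F}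
    (ha : a ≠ 0 → a.order % 3 = 0) (hb : b ≠ 0 → b.order % 3 = 1)
    (hc : c ≠ 0 → c.order % 3 = 2) (h : a + b + c = 0) :
    a = 0 ∧ b = 0 ∧ c = 0 := by
  rcases lt_trichotomy a.orderTop b.orderTop with h1 | h1 | h1
  · rcases lt_trichotomy a.orderTop c.orderTop with h2 | h2 | h2
    · exact (minlem h h1 h2).elim
    · obtain ⟨a0, c0⟩ := pairlem ha hc (by decide) h2
      rw [a0, orderTop_zero] at h1
      exact (not_top_lt h1).elim
    · exact (minlem (show c + a + b = 0 by rw [← h]; ring) h2 (h2.trans h1)).elim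
  · obtain ⟨a0, b0⟩ := pairlem ha hb (by decide) h1
    refine ⟨a0, b0, ?_⟩
    rw [a0, b0] at h
    simpa using h
  · rcases lt_trichotomy b.orderTop c.orderTop with h2 | h2 | h2
    · exact (minlem (show b + a + c = 0 by rw [← h]; ring) h1 h2).elim
    · obtain ⟨b0, c0⟩ := pairlem hb hc (by decide) h2
      rw [b0, orderTop_zero] at h1
      exact (not_top_lt h1).elim
    · exact (minlem (show c + a + b = 0 by rw [← h]; ring) (h2.trans h1) h2).elim

/-- The inner anisotropy: over any field `F`, the form `x³ + T y³ + T² z³` has only the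
trivial zero in `F((T))`. -/
lemma inner_aniso {x y z : HahnSeries ℤ F}
    (h : x ^ 3 + (single 1 1 : HahnSeries ℤ F) * y ^ 3
      + (single 1 1 : HahnSeries ℤ F) ^ 2 * z ^ 3 = 0) :
    x = 0 ∧ y = 0 ∧ z = 0 := by
  have hT : (single 1 1 : HahnSeries ℤ F) ≠ 0 := single_ne_zero one_ne_zero
  have key := key3 (a := x ^ 3) (b := (single 1 1 : HahnSeries ℤ F) * y ^ 3)
      (c := (single 1 1 : HahnSeries ℤ F) ^ 2 * z ^ 3) ?_ ?_ ?_ h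
  · obtain ⟨h1, h2, h3⟩ := key
    refine ⟨pow_eq_zero_iff (by norm_num) |>.mp h1, ?_, ?_⟩
    · rcases mul_eq_zero.mp h2 with h' | h'
      · exact absurd h' hT
      · exact pow_eq_zero_iff (by norm_num) |>.mp h'
    · rcases mul_eq_zero.mp h3 with h' | h'
      · exact absurd h' (pow_ne_zero _ hT)
      · exact pow_eq_zero_iff (by norm_num) |>.mp h'
  · intro hx
    have hx' : x ≠ 0 := fun h' => hx (by rw [h']; simp)
    rw [order_pow, nsmul_eq_mul]
    omega
  · intro hy
    have hy' : y ≠ 0 := fun h' => hy (by rw [h']; simp)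
    rw [order_mul hT (pow_ne_zero _ hy'), order_single one_ne_zero, order_pow, nsmul_eq_mul]
    push_cast
    omega
  · intro hz
    have hz' : z ≠ 0 := fun h' => hz (by rw [h']; simp)
    rw [order_mul (pow_ne_zero _ hT) (pow_ne_zero _ hz'), order_pow, order_pow,
      order_single one_ne_zero, nsmul_eq_mul, nsmul_eq_mul]
    push_cast
    omega

lemma orderTop_single_one_mul (a : ℤ) (x : HahnSeries ℤ F) :
    ((single a 1 : HahnSeries ℤ F) * x).orderTop = a + x.orderTop := by
  by_cases x0 : x = 0
  · simp [x0]
  · rw [← order_eq_orderTop_of_ne_zero (mul_ne_zero (single_ne_zero one_ne_zero) x0),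
      ← order_eq_orderTop_of_ne_zero x0,
      order_mul (single_ne_zero one_ne_zero) x0, order_single one_ne_zero]
    exact_mod_cast rfl

lemma coeff_zero_mul {p q : HahnSeries ℤ F} (hp : 0 ≤ p.orderTop) (hq : 0 ≤ q.orderTop) :
    (p * q).coeff 0 = p.coeff 0 * q.coeff 0 := by
  by_cases p0 : p = 0
  · simp [p0]
  by_cases q0 : q = 0
  · simp [q0]
  rw [← order_eq_orderTop_of_ne_zero p0] at hp
  rw [← order_eq_orderTop_of_ne_zero q0] at hq
  have hp' : (0 : ℤ) ≤ p.order := by exact_mod_cast hp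
  have hq' : (0 : ℤ) ≤ q.order := by exact_mod_cast hq
  rcases lt_or_eq_of_le (add_nonneg hp' hq') with hlt | heq
  · have h1 : (p * q).coeff 0 = 0 := by
      apply coeff_eq_zero_of_lt_order
      rw [order_mul p0 q0]
      exact hlt
    rw [h1]
    rcases (by omega : 0 < p.order ∨ 0 < q.order) with h' | h'
    · rw [coeff_eq_zero_of_lt_order h', zero_mul]
    · rw [coeff_eq_zero_of_lt_order h', mul_zero]
  · have hp0 : p.order = 0 := by omega
    have hq0 : q.order = 0 := by omega
    have := coeff_mul_order_add_order p q
    rw [hp0, hq0, add_zero, leadingCoeff_eq, leadingCoeff_eq, hp0, hq0] at this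
    exact this

lemma orderTop_pow3_nonneg {p : HahnSeries ℤ F} (hp : 0 ≤ p.orderTop) :
    0 ≤ (p ^ 3).orderTop := by
  by_cases p0 : p = 0
  · simp [p0, pow_succ]
  · rw [← order_eq_orderTop_of_ne_zero p0] at hp
    rw [← order_eq_orderTop_of_ne_zero (pow_ne_zero _ p0), order_pow, nsmul_eq_mul]
    have h' : (0 : ℤ) ≤ p.order := by exact_mod_cast hp
    exact_mod_cast by push_cast; omega

lemma coeff_zero_pow3 {p : HahnSeries ℤ F} (hp : 0 ≤ p.orderTop) :
    (p ^ 3).coeff 0 = p.coeff 0 ^ 3 := by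
  have hpp : 0 ≤ (p * p).orderTop :=
    le_trans (add_nonneg hp hp) orderTop_add_le_mul
  rw [show p ^ 3 = p * (p * p) by ring, coeff_zero_mul hp hpp, coeff_zero_mul hp hp]
  ring

end Helpers

section Aniso

local notation "K" => LaurentSeries (LaurentSeries ℂ)

lemma uElt_ne_zero : uElt ≠ 0 := by
  exact C_ne_zero (single_ne_zero one_ne_zero)

lemma orderTop_shift_nonneg {F : Type*} [Field F] {m : ℤ} {t : HahnSeries ℤ F}
    (ht : (m : WithTop ℤ) ≤ t.orderTop) :
    0 ≤ ((single (-m) 1 : HahnSeries ℤ F) * t).orderTop := by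
  rw [orderTop_single_one_mul]
  have h0 : (0 : WithTop ℤ) = ((-m : ℤ) : WithTop ℤ) + (m : ℤ) := by
    rw [← WithTop.coe_add]; norm_num
  rw [h0]
  exact add_le_add_right ht _

lemma coeff_shift {F : Type*} [Field F] {m : ℤ} (t : HahnSeries ℤ F) :
    ((single (-m) 1 : HahnSeries ℤ F) * t).coeff 0 = t.coeff m := by
  have h0 : (0 : ℤ) = m + -m := by ring
  rw [h0, coeff_single_mul_add, one_mul]

lemma aniso (x y z : K) (hne : ¬(x = 0 ∧ y = 0 ∧ z = 0)) :
    x ^ 3 + uElt * y ^ 3 + uElt ^ 2 * z ^ 3 ≠ 0 ∧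
      (x ^ 3 + uElt * y ^ 3 + uElt ^ 2 * z ^ 3).order % 3 = 0 := by
  classical
  set T : LaurentSeries ℂ := single (1 : ℤ) (1 : ℂ) with hTdef
  have hT : T ≠ 0 := single_ne_zero one_ne_zero
  have huC : uElt = single (0 : ℤ) T := rfl
  have huo : (0 : WithTop ℤ) ≤ uElt.orderTop := by
    rw [huC, orderTop_single hT]
    exact_mod_cast le_refl (0 : ℤ)
  have huc0 : uElt.coeff 0 = T := by rw [huC, coeff_single_same]
  set M : WithTop ℤ := min (min x.orderTop y.orderTop) z.orderTop with hMdef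
  have hMne : M ≠ ⊤ := by
    intro hMt
    simp only [hMdef, min_eq_top, orderTop_eq_top] at hMt
    exact hne ⟨hMt.1.1, hMt.1.2, hMt.2⟩
  obtain ⟨m, hm⟩ := WithTop.ne_top_iff_exists.mp hMne
  set s : K := single (-m) 1 with hsdef
  -- orderTop bounds for the shifted series
  have hxm : (m : WithTop ℤ) ≤ x.orderTop := hm.le.trans ((min_le_left _ _).trans (min_le_left _ _))
  have hym : (m : WithTop ℤ) ≤ y.orderTop := hm.le.trans ((min_le_left _ _).trans (min_le_right _ _))
  have hzm : (m : WithTop ℤ) ≤ z.orderTop := hm.le.trans (min_le_right _ _)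
  have hxo : 0 ≤ (s * x).orderTop := orderTop_shift_nonneg hxm
  have hyo : 0 ≤ (s * y).orderTop := orderTop_shift_nonneg hym
  have hzo : 0 ≤ (s * z).orderTop := orderTop_shift_nonneg hzm
  have hx3 : 0 ≤ ((s * x) ^ 3).orderTop := orderTop_pow3_nonneg hxo
  have hy3 : 0 ≤ ((s * y) ^ 3).orderTop := orderTop_pow3_nonneg hyo
  have hz3 : 0 ≤ ((s * z) ^ 3).orderTop := orderTop_pow3_nonneg hzo
  have hA : 0 ≤ (uElt * (s * y) ^ 3).orderTop :=
    le_trans (add_nonneg huo hy3) orderTop_add_le_mul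
  have hu2 : uElt ^ 2 = single (0 : ℤ) (T * T) := by
    rw [pow_two, huC, single_mul_single, add_zero]
  have hu2o : (0 : WithTop ℤ) ≤ (uElt ^ 2).orderTop := by
    rw [hu2, orderTop_single (mul_ne_zero hT hT)]
    exact_mod_cast le_refl (0 : ℤ)
  have hB : 0 ≤ (uElt ^ 2 * (s * z) ^ 3).orderTop :=
    le_trans (add_nonneg hu2o hz3) orderTop_add_le_mul
  -- the residue computation
  have huz : 0 ≤ (uElt * (s * z) ^ 3).orderTop :=
    le_trans (add_nonneg huo hz3) orderTop_add_le_mul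
  set f' : K := (s * x) ^ 3 + uElt * (s * y) ^ 3 + uElt ^ 2 * (s * z) ^ 3 with hf'def
  have hres : f'.coeff 0 = (x.coeff m) ^ 3 + T * (y.coeff m) ^ 3 + T ^ 2 * (z.coeff m) ^ 3 := by
    rw [hf'def, coeff_add, coeff_add,
      show uElt ^ 2 * (s * z) ^ 3 = uElt * (uElt * (s * z) ^ 3) by ring,
      coeff_zero_mul huo huz, coeff_zero_mul huo hz3,
      coeff_zero_mul huo hy3, coeff_zero_pow3 hxo, coeff_zero_pow3 hyo, coeff_zero_pow3 hzo,
      coeff_shift, coeff_shift, coeff_shift, huc0]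
    ring
  -- at least one of the residues is nonzero
  have hattain : ¬(x.coeff m = 0 ∧ y.coeff m = 0 ∧ z.coeff m = 0) := by
    have key : ∀ t : K, t.orderTop = M → t.coeff m ≠ 0 := by
      intro t ht
      have htne : t ≠ 0 := by
        intro h0
        rw [h0, orderTop_zero] at ht
        exact hMne ht.symm
      have : (t.order : WithTop ℤ) = (m : WithTop ℤ) := by
        rw [order_eq_orderTop_of_ne_zero htne, ht, ← hm]
      have hor : t.order = m := by exact_mod_cast this
      rw [← hor]
      rw [← leadingCoeff_eq]; exact leadingCoeff_ne_zero.mpr htne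
    rcases min_cases (min x.orderTop y.orderTop) z.orderTop with ⟨h1, _⟩ | ⟨h1, _⟩
    · rcases min_cases x.orderTop y.orderTop with ⟨h2, _⟩ | ⟨h2, _⟩
      · exact fun hc => key x (by rw [hMdef, h1, h2]) hc.1
      · exact fun hc => key y (by rw [hMdef, h1, h2]) hc.2.1
    · exact fun hc => key z (by rw [hMdef, h1]) hc.2.2
  have hres_ne : f'.coeff 0 ≠ 0 := by
    rw [hres]
    intro h0
    exact hattain (inner_aniso h0)
  -- f' relates to f by a unit
  set f : K := x ^ 3 + uElt * y ^ 3 + uElt ^ 2 * z ^ 3 with hfdef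
  have hs3 : s ^ 3 = (single (-(3 * m)) 1 : K) := by
    rw [hsdef, pow_succ, pow_succ, pow_one, single_mul_single, single_mul_single,
      one_mul, one_mul]
    congr 1
    ring
  have hff' : f' = (single (-(3 * m)) 1 : K) * f := by
    rw [← hs3, hf'def, hfdef]
    ring
  have hf'ne : f' ≠ 0 := fun h0 => hres_ne (by rw [h0]; simp)
  have hfne : f ≠ 0 := by
    intro h0
    apply hf'ne
    rw [hff', h0]
    exact mul_zero (a := (single (-(3 * m)) 1 : LaurentSeries (LaurentSeries ℂ)))
  -- order of f'
  have hf'o_ge : (0 : WithTop ℤ) ≤ f'.orderTop := by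
    rw [hf'def]
    refine le_trans (le_min (le_trans (le_min hx3 hA) min_orderTop_le_orderTop_add) hB)
      min_orderTop_le_orderTop_add
  have hf'o_le : f'.order ≤ 0 := order_le_of_coeff_ne_zero hres_ne
  have hf'o : f'.order = 0 :=
    le_antisymm hf'o_le (zero_le_orderTop_iff.mp hf'o_ge)
  have horder : f.order = 3 * m := by
    have := hf'o
    rw [hff', order_mul (single_ne_zero one_ne_zero) hfne, order_single one_ne_zero] at this
    omega
  exact ⟨hfne, by rw [horder]; omega⟩

end Aniso

/-- Over `K = ℂ((u))((v))`, the diagonal cubic form with coefficients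
`(1, u, u², v, vu, vu², v², v²u, v²u²)` has only the trivial zero. -/
theorem diagonal_cubic_no_nontrivial_zero (x₀ x₁ x₂ x₃ x₄ x₅ x₆ x₇ x₈ :
    LaurentSeries (LaurentSeries ℂ))
    (h : x₀ ^ 3 + uElt * x₁ ^ 3 + uElt ^ 2 * x₂ ^ 3
        + vElt * x₃ ^ 3 + vElt * uElt * x₄ ^ 3 + vElt * uElt ^ 2 * x₅ ^ 3
        + vElt ^ 2 * x₆ ^ 3 + vElt ^ 2 * uElt * x₇ ^ 3 + vElt ^ 2 * uElt ^ 2 * x₈ ^ 3 = 0) :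
    x₀ = 0 ∧ x₁ = 0 ∧ x₂ = 0 ∧ x₃ = 0 ∧ x₄ = 0 ∧ x₅ = 0 ∧ x₆ = 0 ∧ x₇ = 0 ∧ x₈ = 0 := by
  have vne : vElt ≠ 0 := single_ne_zero one_ne_zero
  have hvord : vElt.order = 1 := order_single one_ne_zero
  have aniso0 : ∀ a b c : LaurentSeries (LaurentSeries ℂ),
      a ^ 3 + uElt * b ^ 3 + uElt ^ 2 * c ^ 3 = 0 → a = 0 ∧ b = 0 ∧ c = 0 := by
    intro a b c h0
    by_contra hne
    exact (aniso a b c hne).1 h0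
  have zform : ∀ a b c : LaurentSeries (LaurentSeries ℂ), a = 0 → b = 0 → c = 0 →
      a ^ 3 + uElt * b ^ 3 + uElt ^ 2 * c ^ 3 = 0 := by
    intro a b c h1 h2 h3
    rw [h1, h2, h3]
    ring
  have hsum : (x₀ ^ 3 + uElt * x₁ ^ 3 + uElt ^ 2 * x₂ ^ 3)
      + vElt * (x₃ ^ 3 + uElt * x₄ ^ 3 + uElt ^ 2 * x₅ ^ 3)
      + vElt ^ 2 * (x₆ ^ 3 + uElt * x₇ ^ 3 + uElt ^ 2 * x₈ ^ 3) = 0 := by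
    rw [← h]; ring
  have key := key3 (a := x₀ ^ 3 + uElt * x₁ ^ 3 + uElt ^ 2 * x₂ ^ 3)
      (b := vElt * (x₃ ^ 3 + uElt * x₄ ^ 3 + uElt ^ 2 * x₅ ^ 3))
      (c := vElt ^ 2 * (x₆ ^ 3 + uElt * x₇ ^ 3 + uElt ^ 2 * x₈ ^ 3)) ?_ ?_ ?_ hsum
  · obtain ⟨hA, hB, hC⟩ := key
    obtain ⟨h0, h1, h2⟩ := aniso0 _ _ _ hA
    have hBz : x₃ ^ 3 + uElt * x₄ ^ 3 + uElt ^ 2 * x₅ ^ 3 = 0 := by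
      rcases mul_eq_zero.mp hB with h' | h'
      · exact absurd h' vne
      · exact h'
    have hCz : x₆ ^ 3 + uElt * x₇ ^ 3 + uElt ^ 2 * x₈ ^ 3 = 0 := by
      rcases mul_eq_zero.mp hC with h' | h'
      · exact absurd h' (pow_ne_zero _ vne)
      · exact h'
    obtain ⟨h3, h4, h5⟩ := aniso0 _ _ _ hBz
    obtain ⟨h6, h7, h8⟩ := aniso0 _ _ _ hCz
    exact ⟨h0, h1, h2, h3, h4, h5, h6, h7, h8⟩
  · intro hA0
    refine (aniso x₀ x₁ x₂ ?_).2
    intro ⟨h1, h2, h3⟩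
    exact hA0 (zform _ _ _ h1 h2 h3)
  · intro hB0
    have hBne : x₃ ^ 3 + uElt * x₄ ^ 3 + uElt ^ 2 * x₅ ^ 3 ≠ 0 := by
      intro hb
      apply hB0
      rw [hb]
      exact mul_zero (a := vElt)
    have h35 := (aniso x₃ x₄ x₅ (fun ⟨h1, h2, h3⟩ => hBne (zform _ _ _ h1 h2 h3))).2
    rw [order_mul vne hBne, hvord]
    omega
  · intro hC0
    have hCne : x₆ ^ 3 + uElt * x₇ ^ 3 + uElt ^ 2 * x₈ ^ 3 ≠ 0 := by
      intro hc
      apply hC0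
      rw [hc]
      exact mul_zero (a := vElt ^ 2)
    have h68 := (aniso x₆ x₇ x₈ (fun ⟨h1, h2, h3⟩ => hCne (zform _ _ _ h1 h2 h3))).2
    rw [order_mul (x := vElt ^ 2) (by rw [pow_two]; exact mul_ne_zero vne vne) hCne, order_pow, hvord, nsmul_eq_mul]
    push_cast
    omega
end

section
/- (Lafon) Let K = ℂ((t)) be the field of formal Laurent series over the complex numbers. Then there do not exist elements x, y, u, z of K satisfying simultaneously the two equations x² − t·u² + t = (t²·u² − t)·y² and x² − 2t·u² + t⁻¹ = t·(t²·u² − t)·z². -/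
open HahnSeries

private lemma LafonAux.vmul (f g : LaurentSeries ℂ) :
    (f * g).orderTop = f.orderTop + g.orderTop := by
  rcases eq_or_ne f 0 with rfl | hf
  · simp
  rcases eq_or_ne g 0 with rfl | hg
  · simp
  rw [← order_eq_orderTop_of_ne_zero hf, ← order_eq_orderTop_of_ne_zero hg,
    ← order_eq_orderTop_of_ne_zero (mul_ne_zero hf hg), order_mul hf hg, WithTop.coe_add]

private lemma LafonAux.vsq (f : LaurentSeries ℂ) :
    (f ^ 2).orderTop = f.orderTop + f.orderTop := by
  rw [sq, LafonAux.vmul]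

/-- **Lafon**: over `K = ℂ((t))` there are no elements `x, y, u, z` satisfying both
`x² − t·u² + t = (t²·u² − t)·y²` and `x² − 2t·u² + t⁻¹ = t·(t²·u² − t)·z²`
(an Enriques surface over `ℂ((t))` with no rational point). -/
theorem lafon_enriques_no_point :
    ¬ ∃ x y u z : LaurentSeries ℂ,
      (x ^ 2 - (HahnSeries.single (1 : ℤ) (1 : ℂ)) * u ^ 2
          + (HahnSeries.single (1 : ℤ) (1 : ℂ))
        = ((HahnSeries.single (1 : ℤ) (1 : ℂ)) ^ 2 * u ^ 2
            - (HahnSeries.single (1 : ℤ) (1 : ℂ))) * y ^ 2) ∧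
      (x ^ 2 - 2 * (HahnSeries.single (1 : ℤ) (1 : ℂ)) * u ^ 2
          + (HahnSeries.single (1 : ℤ) (1 : ℂ))⁻¹
        = (HahnSeries.single (1 : ℤ) (1 : ℂ))
            * ((HahnSeries.single (1 : ℤ) (1 : ℂ)) ^ 2 * u ^ 2
              - (HahnSeries.single (1 : ℤ) (1 : ℂ))) * z ^ 2) := by
  rintro ⟨x, y, u, z, h1, h2⟩
  set t : LaurentSeries ℂ := HahnSeries.single (1 : ℤ) (1 : ℂ) with htdef
  have ht : t ≠ 0 := HahnSeries.single_ne_zero one_ne_zero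
  have vt : t.orderTop = ((1 : ℤ) : WithTop ℤ) := HahnSeries.orderTop_single one_ne_zero
  have E1 : t * x ^ 2 = t * ((t * u) ^ 2 - t) * y ^ 2 + ((t * u) ^ 2 - t ^ 2) := by
    linear_combination t * h1
  have E2 : t * x ^ 2 = t ^ 2 * ((t * u) ^ 2 - t) * z ^ 2 + (2 * (t * u) ^ 2 - 1) := by
    linear_combination t * h2 - mul_inv_cancel₀ ht
  set s : LaurentSeries ℂ := t * u with hsdef
  set a : LaurentSeries ℂ := s ^ 2 - t with hadef
  have vt2 : (t ^ 2).orderTop = ((2 : ℤ) : WithTop ℤ) := by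
    rw [LafonAux.vsq, vt]; norm_cast
  rcases le_or_gt ((1 : ℤ) : WithTop ℤ) s.orderTop with hcase | hcase
  · -- Case A : 1 ≤ ord s
    have hVs2 : ((2 : ℤ) : WithTop ℤ) ≤ (s ^ 2).orderTop := by
      rw [LafonAux.vsq]
      calc ((2 : ℤ) : WithTop ℤ) = ((1 : ℤ) : WithTop ℤ) + ((1 : ℤ) : WithTop ℤ) := by norm_cast
        _ ≤ _ := add_le_add hcase hcase
    have hVa : a.orderTop = ((1 : ℤ) : WithTop ℤ) := by
      have hane : a = -(t - s ^ 2) := by rw [hadef]; ring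
      rw [hane, orderTop_neg, orderTop_sub (x := t) (y := s ^ 2) ?_, vt]
      · rw [vt]
        exact lt_of_lt_of_le (by exact_mod_cast (by omega : (1 : ℤ) < 2)) hVs2
    have hVb : (2 * s ^ 2 - 1).orderTop = ((0 : ℤ) : WithTop ℤ) := by
      have h2s : ((2 : ℤ) : WithTop ℤ) ≤ (2 * s ^ 2).orderTop := by
        have h0 : (2 : LaurentSeries ℂ) * s ^ 2 = s ^ 2 + s ^ 2 := by ring
        rw [h0]
        exact le_trans (le_min hVs2 hVs2) min_orderTop_le_orderTop_add
      have hane : 2 * s ^ 2 - 1 = -((1 : LaurentSeries ℂ) - 2 * s ^ 2) := by ring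
      rw [hane, orderTop_neg,
        orderTop_sub (x := (1 : LaurentSeries ℂ)) (y := 2 * s ^ 2) ?_, orderTop_one]
      · norm_cast
      · rw [orderTop_one]
        exact lt_of_lt_of_le (by exact_mod_cast (by omega : (0 : ℤ) < 2)) h2s
    have E2' : t * x ^ 2 - t ^ 2 * a * z ^ 2 = 2 * s ^ 2 - 1 := by
      rw [hadef]; linear_combination E2
    have key : ∃ kx : ℤ, x.orderTop = (kx : WithTop ℤ) ∧ kx ≤ -1 := by
      by_cases hx : x = 0
      · exfalso
        by_cases hz : z = 0
        · have h0 : (2 * s ^ 2 - 1 : LaurentSeries ℂ) = 0 := by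
            rw [← E2', hx, hz]; ring
          rw [h0, orderTop_zero] at hVb
          simp at hVb
        · obtain ⟨kz, hkz⟩ := WithTop.ne_top_iff_exists.mp (orderTop_ne_top.mpr hz)
          have h0 : 2 * s ^ 2 - 1 = -(t ^ 2 * a * z ^ 2) := by rw [← E2', hx]; ring
          have hv : ((0 : ℤ) : WithTop ℤ) = ((3 + 2 * kz : ℤ) : WithTop ℤ) := by
            rw [← hVb, h0, orderTop_neg, LafonAux.vmul, LafonAux.vmul, vt2, hVa,
              LafonAux.vsq, ← hkz]
            norm_cast <;> omega
          have := WithTop.coe_eq_coe.mp hv; omega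
      · obtain ⟨kx, hkx⟩ := WithTop.ne_top_iff_exists.mp (orderTop_ne_top.mpr hx)
        refine ⟨kx, hkx.symm, ?_⟩
        have vtx : (t * x ^ 2).orderTop = ((1 + 2 * kx : ℤ) : WithTop ℤ) := by
          rw [LafonAux.vmul, LafonAux.vsq, vt, ← hkx]; norm_cast <;> omega
        by_cases hz : z = 0
        · exfalso
          have h0 : t * x ^ 2 = 2 * s ^ 2 - 1 := by rw [← E2', hz]; ring
          rw [h0, hVb] at vtx
          have := WithTop.coe_eq_coe.mp vtx; omega
        · obtain ⟨kz, hkz⟩ := WithTop.ne_top_iff_exists.mp (orderTop_ne_top.mpr hz)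
          have vtz : (t ^ 2 * a * z ^ 2).orderTop = ((3 + 2 * kz : ℤ) : WithTop ℤ) := by
            rw [LafonAux.vmul, LafonAux.vmul, vt2, hVa, LafonAux.vsq, ← hkz]
            norm_cast <;> omega
          rcases lt_trichotomy (1 + 2 * kx) (3 + 2 * kz) with h | h | h
          · exfalso
            have hv : (t * x ^ 2 - t ^ 2 * a * z ^ 2).orderTop = ((1 + 2 * kx : ℤ) : WithTop ℤ) := by
              rw [orderTop_sub (by rw [vtx, vtz]; exact_mod_cast h), vtx]
            rw [E2', hVb] at hv
            have := WithTop.coe_eq_coe.mp hv; omega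
          · have hmin : ((1 + 2 * kx : ℤ) : WithTop ℤ)
                ≤ (t * x ^ 2 - t ^ 2 * a * z ^ 2).orderTop := by
              refine le_trans ?_ min_orderTop_le_orderTop_sub
              rw [vtx, vtz]
              exact le_min (le_refl _) (by exact_mod_cast h.le)
            rw [E2', hVb] at hmin
            have := WithTop.coe_le_coe.mp hmin; omega
          · exfalso
            have h0 : t * x ^ 2 - t ^ 2 * a * z ^ 2 = -(t ^ 2 * a * z ^ 2 - t * x ^ 2) := by ring
            have hv : (t * x ^ 2 - t ^ 2 * a * z ^ 2).orderTop = ((3 + 2 * kz : ℤ) : WithTop ℤ) := by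
              rw [h0, orderTop_neg, orderTop_sub (by rw [vtx, vtz]; exact_mod_cast h), vtz]
            rw [E2', hVb] at hv
            have := WithTop.coe_eq_coe.mp hv; omega
    obtain ⟨kx, hkx, hkxle⟩ := key
    have vtx : (t * x ^ 2).orderTop = ((1 + 2 * kx : ℤ) : WithTop ℤ) := by
      rw [LafonAux.vmul, LafonAux.vsq, vt, hkx]; norm_cast <;> omega
    have hVB : ((2 : ℤ) : WithTop ℤ) ≤ (s ^ 2 - t ^ 2).orderTop := by
      refine le_trans (le_min hVs2 (le_of_eq vt2.symm)) min_orderTop_le_orderTop_sub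
    have hE1V : (t * a * y ^ 2 + (s ^ 2 - t ^ 2)).orderTop = ((1 + 2 * kx : ℤ) : WithTop ℤ) := by
      rw [hadef, ← E1]; exact vtx
    by_cases hy : y = 0
    · have h0 : t * a * y ^ 2 + (s ^ 2 - t ^ 2) = s ^ 2 - t ^ 2 := by rw [hy]; ring
      rw [h0] at hE1V
      rw [hE1V] at hVB
      have := WithTop.coe_le_coe.mp hVB; omega
    · obtain ⟨ky, hky⟩ := WithTop.ne_top_iff_exists.mp (orderTop_ne_top.mpr hy)
      have vty : (t * a * y ^ 2).orderTop = ((2 + 2 * ky : ℤ) : WithTop ℤ) := by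
        rw [LafonAux.vmul, LafonAux.vmul, vt, hVa, LafonAux.vsq, ← hky]
        norm_cast <;> omega
      rcases lt_trichotomy (2 + 2 * ky) (1 + 2 * kx) with h | h | h
      · have hv : (t * a * y ^ 2 + (s ^ 2 - t ^ 2)).orderTop = ((2 + 2 * ky : ℤ) : WithTop ℤ) := by
          rw [orderTop_add_eq_left ?_, vty]
          rw [vty]
          exact lt_of_lt_of_le (by exact_mod_cast (by omega : (2 + 2 * ky : ℤ) < 2)) hVB
        rw [hE1V] at hv
        have := WithTop.coe_eq_coe.mp hv; omega
      · omega
      · have hmin : ((1 + 2 * kx : ℤ) : WithTop ℤ)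
            < (t * a * y ^ 2 + (s ^ 2 - t ^ 2)).orderTop := by
          refine lt_of_lt_of_le ?_ min_orderTop_le_orderTop_add
          rw [lt_min_iff]
          constructor
          · rw [vty]; exact_mod_cast h
          · exact lt_of_lt_of_le (by exact_mod_cast (by omega : (1 + 2 * kx : ℤ) < 2)) hVB
        rw [hE1V] at hmin
        exact lt_irrefl _ hmin
  · -- Case B : ord s ≤ 0
    have hs0 : s ≠ 0 := by
      intro h
      rw [h, orderTop_zero] at hcase
      exact absurd hcase (by simp)
    obtain ⟨m, hm⟩ := WithTop.ne_top_iff_exists.mp (orderTop_ne_top.mpr hs0)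
    have hm0 : m ≤ 0 := by
      rw [← hm] at hcase
      have := WithTop.coe_lt_coe.mp hcase; omega
    have vs2 : (s ^ 2).orderTop = ((2 * m : ℤ) : WithTop ℤ) := by
      rw [LafonAux.vsq, ← hm]; norm_cast <;> omega
    have hVa : a.orderTop = ((2 * m : ℤ) : WithTop ℤ) := by
      rw [hadef, orderTop_sub (by rw [vs2, vt]; exact_mod_cast (by omega : (2 * m : ℤ) < 1)), vs2]
    have hVB1 : (s ^ 2 - t ^ 2).orderTop = ((2 * m : ℤ) : WithTop ℤ) := by
      rw [orderTop_sub (by rw [vs2, vt2]; exact_mod_cast (by omega : (2 * m : ℤ) < 2)), vs2]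
    have hVB2 : ((2 * m : ℤ) : WithTop ℤ) ≤ (2 * s ^ 2 - 1).orderTop := by
      refine le_trans (le_min ?_ ?_) min_orderTop_le_orderTop_sub
      · have h0 : (2 : LaurentSeries ℂ) * s ^ 2 = s ^ 2 + s ^ 2 := by ring
        rw [h0]
        exact le_trans (le_min (le_of_eq vs2.symm) (le_of_eq vs2.symm))
          min_orderTop_le_orderTop_add
      · rw [orderTop_one]
        exact_mod_cast (by omega : (2 * m : ℤ) ≤ 0)
    have E1' : t * x ^ 2 - t * a * y ^ 2 = s ^ 2 - t ^ 2 := by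
      rw [hadef]; linear_combination E1
    have key : ∃ kx : ℤ, x.orderTop = (kx : WithTop ℤ) ∧ 1 + 2 * kx ≤ 2 * m - 1 := by
      by_cases hx : x = 0
      · exfalso
        by_cases hy : y = 0
        · have h0 : (s ^ 2 - t ^ 2 : LaurentSeries ℂ) = 0 := by rw [← E1', hx, hy]; ring
          rw [h0, orderTop_zero] at hVB1
          exact WithTop.top_ne_coe hVB1
        · obtain ⟨ky, hky⟩ := WithTop.ne_top_iff_exists.mp (orderTop_ne_top.mpr hy)
          have h0 : s ^ 2 - t ^ 2 = -(t * a * y ^ 2) := by rw [← E1', hx]; ring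
          have hv : ((2 * m : ℤ) : WithTop ℤ) = ((1 + 2 * m + 2 * ky : ℤ) : WithTop ℤ) := by
            rw [← hVB1, h0, orderTop_neg, LafonAux.vmul, LafonAux.vmul, vt, hVa,
              LafonAux.vsq, ← hky]
            norm_cast <;> omega
          have := WithTop.coe_eq_coe.mp hv; omega
      · obtain ⟨kx, hkx⟩ := WithTop.ne_top_iff_exists.mp (orderTop_ne_top.mpr hx)
        refine ⟨kx, hkx.symm, ?_⟩
        have vtx : (t * x ^ 2).orderTop = ((1 + 2 * kx : ℤ) : WithTop ℤ) := by
          rw [LafonAux.vmul, LafonAux.vsq, vt, ← hkx]; norm_cast <;> omega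
        by_cases hy : y = 0
        · exfalso
          have h0 : t * x ^ 2 = s ^ 2 - t ^ 2 := by rw [← E1', hy]; ring
          rw [h0, hVB1] at vtx
          have := WithTop.coe_eq_coe.mp vtx; omega
        · obtain ⟨ky, hky⟩ := WithTop.ne_top_iff_exists.mp (orderTop_ne_top.mpr hy)
          have vty : (t * a * y ^ 2).orderTop = ((1 + 2 * m + 2 * ky : ℤ) : WithTop ℤ) := by
            rw [LafonAux.vmul, LafonAux.vmul, vt, hVa, LafonAux.vsq, ← hky]
            norm_cast <;> omega
          rcases lt_trichotomy (1 + 2 * kx) (1 + 2 * m + 2 * ky) with h | h | h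
          · exfalso
            have hv : (t * x ^ 2 - t * a * y ^ 2).orderTop = ((1 + 2 * kx : ℤ) : WithTop ℤ) := by
              rw [orderTop_sub (by rw [vtx, vty]; exact_mod_cast h), vtx]
            rw [E1', hVB1] at hv
            have := WithTop.coe_eq_coe.mp hv; omega
          · have hmin : ((1 + 2 * kx : ℤ) : WithTop ℤ)
                ≤ (t * x ^ 2 - t * a * y ^ 2).orderTop := by
              refine le_trans ?_ min_orderTop_le_orderTop_sub
              rw [vtx, vty]
              exact le_min (le_refl _) (by exact_mod_cast h.le)
            rw [E1', hVB1] at hmin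
            have := WithTop.coe_le_coe.mp hmin; omega
          · exfalso
            have h0 : t * x ^ 2 - t * a * y ^ 2 = -(t * a * y ^ 2 - t * x ^ 2) := by ring
            have hv : (t * x ^ 2 - t * a * y ^ 2).orderTop
                = ((1 + 2 * m + 2 * ky : ℤ) : WithTop ℤ) := by
              rw [h0, orderTop_neg, orderTop_sub (by rw [vtx, vty]; exact_mod_cast h), vty]
            rw [E1', hVB1] at hv
            have := WithTop.coe_eq_coe.mp hv; omega
    obtain ⟨kx, hkx, hkxle⟩ := key
    have vtx : (t * x ^ 2).orderTop = ((1 + 2 * kx : ℤ) : WithTop ℤ) := by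
      rw [LafonAux.vmul, LafonAux.vsq, vt, hkx]; norm_cast <;> omega
    have hE2V : (t ^ 2 * a * z ^ 2 + (2 * s ^ 2 - 1)).orderTop
        = ((1 + 2 * kx : ℤ) : WithTop ℤ) := by
      rw [hadef, ← E2]; exact vtx
    by_cases hz : z = 0
    · have h0 : t ^ 2 * a * z ^ 2 + (2 * s ^ 2 - 1) = 2 * s ^ 2 - 1 := by rw [hz]; ring
      rw [h0] at hE2V
      rw [hE2V] at hVB2
      have := WithTop.coe_le_coe.mp hVB2; omega
    · obtain ⟨kz, hkz⟩ := WithTop.ne_top_iff_exists.mp (orderTop_ne_top.mpr hz)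
      have vtz : (t ^ 2 * a * z ^ 2).orderTop = ((2 + 2 * m + 2 * kz : ℤ) : WithTop ℤ) := by
        rw [LafonAux.vmul, LafonAux.vmul, vt2, hVa, LafonAux.vsq, ← hkz]
        norm_cast <;> omega
      rcases lt_trichotomy (2 + 2 * m + 2 * kz) (1 + 2 * kx) with h | h | h
      · have hv : (t ^ 2 * a * z ^ 2 + (2 * s ^ 2 - 1)).orderTop
            = ((2 + 2 * m + 2 * kz : ℤ) : WithTop ℤ) := by
          rw [orderTop_add_eq_left ?_, vtz]
          rw [vtz]
          refine lt_of_lt_of_le ?_ hVB2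
          exact_mod_cast (by omega : (2 + 2 * m + 2 * kz : ℤ) < 2 * m)
        rw [hE2V] at hv
        have := WithTop.coe_eq_coe.mp hv; omega
      · omega
      · have hmin : ((1 + 2 * kx : ℤ) : WithTop ℤ)
            < (t ^ 2 * a * z ^ 2 + (2 * s ^ 2 - 1)).orderTop := by
          refine lt_of_lt_of_le ?_ min_orderTop_le_orderTop_add
          rw [lt_min_iff]
          constructor
          · rw [vtz]; exact_mod_cast h
          · refine lt_of_lt_of_le ?_ hVB2
            exact_mod_cast (by omega : (1 + 2 * kx : ℤ) < 2 * m)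
        rw [hE2V] at hmin
        exact lt_irrefl _ hmin
end

section
/- Let p be an odd prime, let a ∈ ℤ_p be a unit whose reduction modulo p is not a square in the residue field, let n, m ≥ 0 be integers, and let α, β ∈ ℤ_p be units such that α·β is a square in ℤ_p. Then the quadratic form p^{2n+1}·α·X₀² − a·p^{2m+1}·β·X₁² + X₂² − a·(p^{2n+1}·α + p^{2m+1}·β + 1)·X₃² has no nontrivial zero over ℚ_p: its only zero in ℚ_p⁴ is (0, 0, 0, 0). -/
section Aux

variable {p : ℕ} [hp : Fact p.Prime]

private lemma padic_val_eq_of_norm_eq {x y : ℚ_[p]} (hx : x ≠ 0) (hy : y ≠ 0)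
    (h : ‖x‖ = ‖y‖) : x.valuation = y.valuation := by
  rw [Padic.norm_eq_zpow_neg_valuation hx, Padic.norm_eq_zpow_neg_valuation hy] at h
  have hp1 : (1:ℝ) < p := by exact_mod_cast hp.1.one_lt
  have := zpow_right_injective₀ (by positivity) (ne_of_gt hp1) h
  omega

private lemma padic_val_neg {x : ℚ_[p]} (hx : x ≠ 0) : (-x).valuation = x.valuation :=
  padic_val_eq_of_norm_eq (neg_ne_zero.mpr hx) hx (norm_neg x)

private lemma isUnit_of_toZMod_ne_zero {z : ℤ_[p]} (h : PadicInt.toZMod z ≠ 0) : IsUnit z := by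
  by_contra hu
  exact h (by
    have : z ∈ RingHom.ker (PadicInt.toZMod (p := p)) := by
      rw [PadicInt.ker_toZMod]
      exact (IsLocalRing.mem_maximalIdeal z).mpr hu
    exact this)

private lemma toZMod_ne_zero_of_isUnit {z : ℤ_[p]} (h : IsUnit z) : PadicInt.toZMod z ≠ 0 :=
  (h.map PadicInt.toZMod).ne_zero

private lemma coe_unit_ne_zero {z : ℤ_[p]} (h : IsUnit z) : (z : ℚ_[p]) ≠ 0 := by
  intro h0
  have : ‖z‖ = 1 := PadicInt.isUnit_iff.mp h
  rw [← PadicInt.padic_norm_e_of_padicInt, h0, norm_zero] at this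
  norm_num at this

private lemma coe_unit_val_zero {z : ℤ_[p]} (h : IsUnit z) : (z : ℚ_[p]).valuation = 0 := by
  have h1 : ‖(z : ℚ_[p])‖ = ‖(1 : ℚ_[p])‖ := by
    rw [PadicInt.padic_norm_e_of_padicInt, PadicInt.isUnit_iff.mp h, norm_one]
  have := padic_val_eq_of_norm_eq (coe_unit_ne_zero h) one_ne_zero h1
  rwa [Padic.valuation_one] at this

private lemma val_sq {x : ℚ_[p]} (hx : x ≠ 0) : (x ^ 2).valuation = 2 * x.valuation := by
  rw [sq, Padic.valuation_mul hx hx]; ring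

/-- Core anisotropy lemma: if `b` is a unit whose reduction mod `p` is not a square,
then `x² - b y²` is nonzero (when `x, y` not both zero) and has even valuation. -/
private lemma key (b : ℤ_[p]) (hb : IsUnit b) (hns : ¬ IsSquare (PadicInt.toZMod b))
    (x y : ℚ_[p]) (hxy : x ≠ 0 ∨ y ≠ 0) :
    x ^ 2 - (b : ℚ_[p]) * y ^ 2 ≠ 0 ∧
      ∃ k : ℤ, (x ^ 2 - (b : ℚ_[p]) * y ^ 2).valuation = 2 * k := by
  have hbq : (b : ℚ_[p]) ≠ 0 := coe_unit_ne_zero hb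
  have hbv : (b : ℚ_[p]).valuation = 0 := coe_unit_val_zero hb
  have hbn : ‖(b : ℚ_[p])‖ = 1 := by
    rw [PadicInt.padic_norm_e_of_padicInt]; exact PadicInt.isUnit_iff.mp hb
  by_cases hy : y = 0
  · have hx : x ≠ 0 := hxy.resolve_right (by simp [hy])
    subst hy
    have he : x ^ 2 - (b : ℚ_[p]) * (0:ℚ_[p]) ^ 2 = x ^ 2 := by ring
    rw [he]
    exact ⟨pow_ne_zero 2 hx, x.valuation, val_sq hx⟩
  by_cases hx : x = 0
  · subst hx
    have hby : (b : ℚ_[p]) * y ^ 2 ≠ 0 := mul_ne_zero hbq (pow_ne_zero 2 hy)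
    have hne : (0:ℚ_[p]) ^ 2 - (b : ℚ_[p]) * y ^ 2 ≠ 0 := by
      simpa [sub_eq_zero] using hby.symm ∘ Eq.symm
    refine ⟨by simpa using hne, y.valuation, ?_⟩
    have : ((0:ℚ_[p]) ^ 2 - (b : ℚ_[p]) * y ^ 2) = -((b : ℚ_[p]) * y ^ 2) := by ring
    rw [this, padic_val_neg hby, Padic.valuation_mul hbq (pow_ne_zero 2 hy), hbv, val_sq hy]
    ring
  -- both nonzero
  by_cases hnorm : ‖x‖ = ‖y‖
  · -- equal norms: divide out
    have ht : ‖x / y‖ ≤ 1 := by rw [norm_div, hnorm, div_self (norm_ne_zero_iff.mpr hy)]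
    set z : ℤ_[p] := ⟨x / y, ht⟩ with hz
    have hzcoe : (z : ℚ_[p]) = x / y := rfl
    have hzn : PadicInt.toZMod (z ^ 2 - b) ≠ 0 := by
      intro h0
      apply hns
      rw [map_sub, map_pow, sub_eq_zero] at h0
      exact ⟨PadicInt.toZMod z, by rw [← h0, sq]⟩
    have hzu : IsUnit (z ^ 2 - b) := isUnit_of_toZMod_ne_zero hzn
    have heq : x ^ 2 - (b : ℚ_[p]) * y ^ 2 = ((z ^ 2 - b : ℤ_[p]) : ℚ_[p]) * y ^ 2 := by
      push_cast [hzcoe]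
      field_simp
    refine ⟨?_, ?_⟩
    · rw [heq]; exact mul_ne_zero (coe_unit_ne_zero hzu) (pow_ne_zero 2 hy)
    · refine ⟨y.valuation, ?_⟩
      rw [heq, Padic.valuation_mul (coe_unit_ne_zero hzu) (pow_ne_zero 2 hy),
        coe_unit_val_zero hzu, val_sq hy]
      ring
  · -- distinct norms
    have hx2 : x ^ 2 ≠ 0 := pow_ne_zero 2 hx
    have hby : -((b : ℚ_[p]) * y ^ 2) ≠ 0 := by
      simp only [neg_ne_zero]; exact mul_ne_zero hbq (pow_ne_zero 2 hy)
    have hnn : ‖x ^ 2‖ ≠ ‖-((b : ℚ_[p]) * y ^ 2)‖ := by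
      rw [norm_neg, norm_mul, hbn, one_mul, norm_pow, norm_pow]
      intro hcon
      exact hnorm (by nlinarith [norm_nonneg x, norm_nonneg y])
    have hsum : x ^ 2 - (b : ℚ_[p]) * y ^ 2 = x ^ 2 + -((b : ℚ_[p]) * y ^ 2) := by ring
    have hmax : ‖x ^ 2 - (b : ℚ_[p]) * y ^ 2‖ = max ‖x ^ 2‖ ‖-((b : ℚ_[p]) * y ^ 2)‖ := by
      rw [hsum]; exact Padic.add_eq_max_of_ne hnn
    have hne : x ^ 2 - (b : ℚ_[p]) * y ^ 2 ≠ 0 := by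
      intro h0
      rw [h0, norm_zero] at hmax
      rcases max_choice ‖x ^ 2‖ ‖-((b : ℚ_[p]) * y ^ 2)‖ with hc | hc <;> rw [hc] at hmax
      · exact hx2 (norm_eq_zero.mp hmax.symm)
      · exact hby (norm_eq_zero.mp hmax.symm)
    refine ⟨hne, ?_⟩
    rcases max_choice ‖x ^ 2‖ ‖-((b : ℚ_[p]) * y ^ 2)‖ with hc | hc <;> rw [hc] at hmax
    · exact ⟨x.valuation, by rw [padic_val_eq_of_norm_eq hne hx2 hmax, val_sq hx]⟩
    · refine ⟨y.valuation, ?_⟩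
      rw [padic_val_eq_of_norm_eq hne hby hmax, padic_val_neg (neg_ne_zero.mp hby),
        Padic.valuation_mul hbq (pow_ne_zero 2 hy), hbv, val_sq hy]
      ring

private lemma nonsq_mul_sq {F : Type*} [Field F] {A u : F} (hA : ¬ IsSquare A) (hu : u ≠ 0) :
    ¬ IsSquare (A * u ^ 2) := by
  rintro ⟨s, hs⟩
  exact hA ⟨s / u, by field_simp; linear_combination hs⟩

end Aux

/-- Over `ℚ_p` (`p` an odd prime), for `a ∈ ℤ_p` a unit which is not a square modulo `p`,
`n, m ≥ 0`, and units `α, β ∈ ℤ_p` with `α·β` a square in `ℤ_p`, the quadratic form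
`p^{2n+1}·α·X₀² − a·p^{2m+1}·β·X₁² + X₂² − a·(p^{2n+1}·α + p^{2m+1}·β + 1)·X₃²`
has only the trivial zero in `ℚ_p⁴`. -/
theorem quadric_fiber_no_point (p : ℕ) [Fact p.Prime] (hodd : p ≠ 2)
    (a : ℤ_[p]) (ha : IsUnit a) (hns : ¬ IsSquare (PadicInt.toZMod a))
    (n m : ℕ) (α β : ℤ_[p]) (hα : IsUnit α) (hβ : IsUnit β) (hαβ : IsSquare (α * β))
    (X₀ X₁ X₂ X₃ : ℚ_[p])
    (h : (p : ℚ_[p]) ^ (2 * n + 1) * (α : ℚ_[p]) * X₀ ^ 2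
        - (a : ℚ_[p]) * (p : ℚ_[p]) ^ (2 * m + 1) * (β : ℚ_[p]) * X₁ ^ 2
        + X₂ ^ 2
        - (a : ℚ_[p]) * ((p : ℚ_[p]) ^ (2 * n + 1) * (α : ℚ_[p])
            + (p : ℚ_[p]) ^ (2 * m + 1) * (β : ℚ_[p]) + 1) * X₃ ^ 2 = 0) :
    X₀ = 0 ∧ X₁ = 0 ∧ X₂ = 0 ∧ X₃ = 0 := by
  have hpne : (p : ℚ_[p]) ≠ 0 := by
    exact_mod_cast (Fact.out : p.Prime).ne_zero
  -- the unit w = p^{2n+1} α + p^{2m+1} β + 1 with reduction 1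
  set w : ℤ_[p] := (p:ℤ_[p]) ^ (2*n+1) * α + (p:ℤ_[p]) ^ (2*m+1) * β + 1 with hw
  have hwz : PadicInt.toZMod w = 1 := by
    rw [hw]
    simp [map_add, map_mul, map_pow, map_one, (by simp : PadicInt.toZMod (p:ℤ_[p]) = 0)]
  have hwu : IsUnit w := isUnit_of_toZMod_ne_zero (by rw [hwz]; exact one_ne_zero)
  set b₁ : ℤ_[p] := a * w with hb₁
  have hb₁u : IsUnit b₁ := ha.mul hwu
  have hb₁ns : ¬ IsSquare (PadicInt.toZMod b₁) := by
    rw [hb₁, map_mul, hwz, mul_one]; exact hns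
  -- the unit b₂ = a * β * α⁻¹ whose reduction is a nonsquare
  set α' : ℤ_[p] := ((hα.unit⁻¹ : ℤ_[p]ˣ) : ℤ_[p]) with hα'
  have hαα' : α * α' = 1 := by
    rw [hα']
    exact hα.mul_val_inv
  have hα'u : IsUnit α' := IsUnit.of_mul_eq_one α (by rw [mul_comm]; exact hαα')
  set b₂ : ℤ_[p] := a * β * α' with hb₂
  have hb₂u : IsUnit b₂ := (ha.mul hβ).mul hα'u
  obtain ⟨c, hc⟩ := hαβ
  have hcu : IsUnit c := isUnit_of_mul_isUnit_left (hc ▸ hα.mul hβ)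
  have hb₂eq : b₂ = a * (c * α') ^ 2 := by
    rw [hb₂]
    linear_combination a * α' ^ 2 * hc - a * β * α' * hαα'
  have hb₂ns : ¬ IsSquare (PadicInt.toZMod b₂) := by
    rw [hb₂eq, map_mul, map_pow]
    exact nonsq_mul_sq hns (toZMod_ne_zero_of_isUnit (hcu.mul hα'u))
  -- recast the equation
  have hαα'Q : (α : ℚ_[p]) * (α' : ℚ_[p]) = 1 := by exact_mod_cast congrArg _ hαα'
  have hQ : (p : ℚ_[p]) * (α : ℚ_[p])
        * (((p : ℚ_[p]) ^ n * X₀) ^ 2 - (b₂ : ℚ_[p]) * ((p : ℚ_[p]) ^ m * X₁) ^ 2)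
      + (X₂ ^ 2 - (b₁ : ℚ_[p]) * X₃ ^ 2) = 0 := by
    rw [hb₂, hb₁, hw]
    push_cast
    linear_combination h - (a : ℚ_[p]) * (p : ℚ_[p]) ^ (2 * m + 1) * (β : ℚ_[p]) * X₁ ^ 2 * hαα'Q
  by_cases h01 : X₀ = 0 ∧ X₁ = 0
  · obtain ⟨h0, h1⟩ := h01
    have hT : X₂ ^ 2 - (b₁ : ℚ_[p]) * X₃ ^ 2 = 0 := by
      rw [h0, h1] at hQ
      linear_combination hQ
    by_cases h23 : X₂ = 0 ∧ X₃ = 0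
    · exact ⟨h0, h1, h23.1, h23.2⟩
    · exact absurd hT (key b₁ hb₁u hb₁ns X₂ X₃ (by tauto)).1
  · exfalso
    have hxy : (p : ℚ_[p]) ^ n * X₀ ≠ 0 ∨ (p : ℚ_[p]) ^ m * X₁ ≠ 0 := by
      rcases not_and_or.mp h01 with h0 | h1
      · exact Or.inl (mul_ne_zero (pow_ne_zero n hpne) h0)
      · exact Or.inr (mul_ne_zero (pow_ne_zero m hpne) h1)
    obtain ⟨hSne, k, hSval⟩ := key b₂ hb₂u hb₂ns _ _ hxy
    set E := ((p : ℚ_[p]) ^ n * X₀) ^ 2 - (b₂ : ℚ_[p]) * ((p : ℚ_[p]) ^ m * X₁) ^ 2 with hE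
    have hαq : (α : ℚ_[p]) ≠ 0 := coe_unit_ne_zero hα
    have hSfull : (p : ℚ_[p]) * (α : ℚ_[p]) * E ≠ 0 :=
      mul_ne_zero (mul_ne_zero hpne hαq) hSne
    have hT : X₂ ^ 2 - (b₁ : ℚ_[p]) * X₃ ^ 2 = -((p : ℚ_[p]) * (α : ℚ_[p]) * E) := by
      linear_combination hQ
    have hTne : X₂ ^ 2 - (b₁ : ℚ_[p]) * X₃ ^ 2 ≠ 0 := by
      rw [hT]; exact neg_ne_zero.mpr hSfull
    have h23 : X₂ ≠ 0 ∨ X₃ ≠ 0 := by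
      by_contra hcon
      push_neg at hcon
      exact hTne (by rw [hcon.1, hcon.2]; ring)
    obtain ⟨-, j, hTval⟩ := key b₁ hb₁u hb₁ns X₂ X₃ h23
    have hval : (X₂ ^ 2 - (b₁ : ℚ_[p]) * X₃ ^ 2).valuation = 1 + 2 * k := by
      rw [hT, padic_val_neg hSfull, Padic.valuation_mul (mul_ne_zero hpne hαq) hSne,
        Padic.valuation_mul hpne hαq, Padic.valuation_p, coe_unit_val_zero hα, hSval]
      ring
    omega
end
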